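/- (Worst-case update measure) Let k ≥ 3 be odd. For (i,j) ∈ {0,…,2^{k−1}−1} × {0,…,k−1}, let u(i,j) = 1 + |{m ∈ {0,…,2^{k−1}−1} : (i,j) ∈ B_m}|. Then max over all (i,j) of u(i,j) equals ⌊k/2⌋ + 2; that is, u(i,j) ≤ ⌊k/2⌋ + 2 for all (i,j), and this bound is attained. -/

import Mathlib

/-- The `j`-th bit of `i` (`j ≥ 0`). -/
def bitp (i j : ℕ) : Bool := i.testBit j

/-- The `(j-1)`-th bit of `i`, with the convention that the bit at position `-1` is `0`. -/
def bitm (i j : ℕ) : Bool := if j = 0 then false else i.testBit (j - 1)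

/-- `i` is dark in column `j` iff `i(j) = i(j-1)`. -/
def dark (i j : ℕ) : Prop := bitp i j = bitm i j

instance (i j : ℕ) : Decidable (dark i j) := by unfold dark; infer_instance

/-- `ℓ_{i,j} = i ⊕ (2^j - 1)`. -/
def ell (i j : ℕ) : ℕ := i ^^^ (2 ^ j - 1)

/-- The set `B_{i,j}`. -/
def Bset (k i j : ℕ) : Finset (ℕ × ℕ) :=
  if dark i j then
    ((Finset.range k).filter
        (fun j' : ℕ => ((j : ℤ) - (j' : ℤ)) % (k : ℤ) ≤ ((k / 2 : ℕ) : ℤ))).image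
      (fun j' => (i, j'))
  else {(i, j)}

/-- The butterfly support set `B_i = ⋃_{j ∈ [k]} B_{ℓ_{i,j}, j}`. -/
def Bline (k i : ℕ) : Finset (ℕ × ℕ) :=
  (Finset.range k).biUnion (fun j => Bset k (ell i j) j)

/-- Horizontal parity `h_i(a)`. -/
def hpar (k : ℕ) (a : ℕ → ℕ → ZMod 2) (i : ℕ) : ZMod 2 :=
  ∑ j ∈ Finset.range k, a i j

/-- Butterfly parity `b_i(a)`. -/
def bpar (k : ℕ) (a : ℕ → ℕ → ZMod 2) (i : ℕ) : ZMod 2 :=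
  ∑ p ∈ Bline k i, a p.1 p.2

/-- The number of parity elements updated when `a_{i,j}` changes. -/
def ucount (k i j : ℕ) : ℕ :=
  1 + ((Finset.range (2 ^ (k - 1))).filter (fun m => (i, j) ∈ Bline k m)).card

/-- Worst-case update measure: `u(i,j) ≤ ⌊k/2⌋ + 2` for all `(i,j)`, and the bound is
attained. -/
lemma ell_ell (i j : ℕ) : ell (ell i j) j = i := by
  simp [ell, Nat.xor_assoc]

lemma ell_inj (i : ℕ) : Function.Injective (ell i) := by
  intro a b h
  have h2 : 2 ^ a - 1 = 2 ^ b - 1 := by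
    have := congrArg (fun x => i ^^^ x) h
    simpa [ell, ← Nat.xor_assoc] using this
  have ha : 1 ≤ 2 ^ a := Nat.one_le_two_pow
  have hb : 1 ≤ 2 ^ b := Nat.one_le_two_pow
  have h3 : (2 : ℕ) ^ a = 2 ^ b := by omega
  exact Nat.pow_right_injective (le_refl 2) h3

lemma bset_fst {k i j₀ : ℕ} {p : ℕ × ℕ} (h : p ∈ Bset k i j₀) : p.1 = i := by
  unfold Bset at h
  split at h
  · simp only [Finset.mem_image] at h
    obtain ⟨j', _, rfl⟩ := h
    rfl
  · simp only [Finset.mem_singleton] at h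
    rw [h]

lemma bset_mod {k i j j₀ : ℕ} (hk : 0 < k) (h : (i, j) ∈ Bset k i j₀) :
    0 ≤ ((j₀ : ℤ) - (j : ℤ)) % (k : ℤ) ∧
      ((j₀ : ℤ) - (j : ℤ)) % (k : ℤ) ≤ ((k / 2 : ℕ) : ℤ) := by
  have hk' : (k : ℤ) ≠ 0 := by exact_mod_cast hk.ne'
  refine ⟨Int.emod_nonneg _ hk', ?_⟩
  unfold Bset at h
  split at h
  · simp only [Finset.mem_image, Finset.mem_filter, Finset.mem_range] at h
    obtain ⟨j', ⟨_, hle⟩, heq⟩ := h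
    have : j' = j := by simpa using congrArg Prod.snd heq
    rwa [this] at hle
  · simp only [Finset.mem_singleton, Prod.mk.injEq] at h
    have : (j₀ : ℤ) - (j : ℤ) = 0 := by
      have := h.2; omega
    rw [this]
    simp only [Int.zero_emod]
    positivity

lemma mem_bline_iff {k i j m : ℕ} :
    (i, j) ∈ Bline k m ↔ ∃ j₀ < k, m = ell i j₀ ∧ (i, j) ∈ Bset k i j₀ := by
  unfold Bline
  simp only [Finset.mem_biUnion, Finset.mem_range]
  constructor
  · rintro ⟨j₀, hj₀, hmem⟩
    have hfst : i = ell m j₀ := bset_fst hmem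
    have hm : m = ell i j₀ := by rw [hfst, ell_ell]
    exact ⟨j₀, hj₀, hm, by rwa [← hfst] at hmem⟩
  · rintro ⟨j₀, hj₀, rfl, hmem⟩
    exact ⟨j₀, hj₀, by rwa [ell_ell]⟩

lemma key_eq (k i j : ℕ) (hk : 0 < k) (hi : i < 2 ^ (k - 1)) :
    (Finset.range (2 ^ (k - 1))).filter (fun m => (i, j) ∈ Bline k m) =
      ((Finset.range k).filter (fun j₀ => (i, j) ∈ Bset k i j₀)).image (ell i) := by
  ext m
  simp only [Finset.mem_filter, Finset.mem_range, Finset.mem_image, mem_bline_iff]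
  constructor
  · rintro ⟨_, j₀, hj₀, rfl, hmem⟩
    exact ⟨j₀, ⟨hj₀, hmem⟩, rfl⟩
  · rintro ⟨j₀, ⟨hj₀, hmem⟩, rfl⟩
    have h2 : 2 ^ j₀ - 1 < 2 ^ (k - 1) := by
      have : 2 ^ j₀ ≤ 2 ^ (k - 1) := Nat.pow_le_pow_right (by norm_num) (by omega)
      have : 1 ≤ 2 ^ j₀ := Nat.one_le_two_pow
      omega
    exact ⟨Nat.xor_lt_two_pow hi h2, j₀, hj₀, rfl, hmem⟩

lemma ucount_eq (k i j : ℕ) (hk : 0 < k) (hi : i < 2 ^ (k - 1)) :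
    ucount k i j =
      1 + ((Finset.range k).filter (fun j₀ => (i, j) ∈ Bset k i j₀)).card := by
  rw [ucount, key_eq k i j hk hi, Finset.card_image_of_injective _ (ell_inj i)]

theorem worst_case_update_measure (k : ℕ) (hk : 3 ≤ k) (hodd : Odd k) :
    (∀ i < 2 ^ (k - 1), ∀ j < k, ucount k i j ≤ k / 2 + 2) ∧
    (∃ i < 2 ^ (k - 1), ∃ j < k, ucount k i j = k / 2 + 2) := by
  have hk0 : 0 < k := by omega
  constructor
  · intro i hi j hj
    rw [ucount_eq k i j hk0 hi]
    have hcard : ((Finset.range k).filter (fun j₀ => (i, j) ∈ Bset k i j₀)).card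
        ≤ k / 2 + 1 := by
      have hmain := Finset.card_le_card_of_injOn
        (s := (Finset.range k).filter (fun j₀ => (i, j) ∈ Bset k i j₀))
        (f := fun j₀ => (((j₀ : ℤ) - (j : ℤ)) % (k : ℤ)).toNat)
        (t := Finset.range (k / 2 + 1)) ?_ ?_
      · simpa using hmain
      · intro j₀ hj₀
        simp only [Finset.mem_coe, Finset.mem_filter, Finset.mem_range] at hj₀
        obtain ⟨h0, h1⟩ := bset_mod hk0 hj₀.2
        simp only [Finset.mem_coe, Finset.mem_range]
        omega
      · intro a ha b hb hab
        simp only [Finset.mem_coe, Finset.mem_filter, Finset.mem_range] at ha hb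
        obtain ⟨ha0, ha1⟩ := bset_mod hk0 ha.2
        obtain ⟨hb0, hb1⟩ := bset_mod hk0 hb.2
        have heq : ((a : ℤ) - (j : ℤ)) % (k : ℤ) = ((b : ℤ) - (j : ℤ)) % (k : ℤ) := by
          simp only at hab
          omega
        have h' : ((a : ℤ) - j) ≡ ((b : ℤ) - j) [ZMOD (k : ℤ)] := heq
        have hd := h'.dvd
        rw [show ((b : ℤ) - j) - ((a : ℤ) - j) = (b : ℤ) - a by ring] at hd
        have habs : (b : ℤ) - a = 0 := by
          refine Int.eq_zero_of_abs_lt_dvd hd ?_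
          rw [abs_lt]
          constructor <;> push_cast <;> omega
        omega
    omega
  · have hi0 : (0 : ℕ) < 2 ^ (k - 1) := Nat.two_pow_pos _
    refine ⟨0, hi0, 0, hk0, ?_⟩
    rw [ucount_eq k 0 0 hk0 hi0]
    have hset : (Finset.range k).filter (fun j₀ => ((0 : ℕ), (0 : ℕ)) ∈ Bset k 0 j₀) =
        Finset.range (k / 2 + 1) := by
      ext x
      simp only [Finset.mem_filter, Finset.mem_range]
      have hdark : dark 0 x := by simp [dark, bitp, bitm, Nat.zero_testBit]
      rw [Bset, if_pos hdark, Finset.mem_image]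
      have hemod : ∀ y : ℕ, y < k → ((y : ℤ) - ((0 : ℕ) : ℤ)) % (k : ℤ) = (y : ℤ) := by
        intro y hy
        rw [Nat.cast_zero, sub_zero]
        exact Int.emod_eq_of_lt (by positivity) (by exact_mod_cast hy)
      constructor
      · rintro ⟨hx, j', hj'mem, hj'eq⟩
        simp only [Finset.mem_filter, Finset.mem_range] at hj'mem
        have hj'0 : j' = 0 := by simpa using congrArg Prod.snd hj'eq
        subst hj'0
        have hle := hj'mem.2
        rw [hemod x hx] at hle
        have : x ≤ k / 2 := by exact_mod_cast hle
        omega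
      · intro hx
        have hxk : x < k := by omega
        refine ⟨hxk, 0, ?_, rfl⟩
        simp only [Finset.mem_filter, Finset.mem_range]
        refine ⟨hk0, ?_⟩
        rw [hemod x hxk]
        exact_mod_cast Nat.le_of_lt_succ hx
    rw [hset, Finset.card_range]
    omega
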